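/- Let R be a commutative ring, L a Lie algebra over R, and φ : L → L a Lie algebra homomorphism with φ ∘ φ = φ. Define operations x ⊢ y := ⁅φ x, y⁆, x ⊣ y := ⁅x, φ y⁆, x ⊥ y := ⁅x, y⁆. Then for all x, y, z ∈ L the Lie tri-algebra identities hold: (i) x ⊢ y = -(y ⊣ x); (ii) x ⊥ y = -(y ⊥ x); (iii) (x ⊥ y) ⊢ z = (x ⊢ y) ⊢ z; (iv) x ⊢ (y ⊢ z) = (x ⊢ y) ⊢ z + y ⊢ (x ⊢ z) (left Leibniz identity for ⊢); (v) (x ⊢ y) ⊥ z = x ⊢ (y ⊥ z) + (x ⊢ z) ⊥ y; (vi) ((x ⊥ y) ⊥ z) + ((y ⊥ z) ⊥ x) + ((z ⊥ x) ⊥ y) = 0. -/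
import Mathlib

/-- A homomorphic averaging operator `φ` on a Lie algebra `L` induces a
Lie tri-algebra structure with `x ⊢ y := ⁅φ x, y⁆`, `x ⊣ y := ⁅x, φ y⁆`, `x ⊥ y := ⁅x, y⁆`. -/
theorem lie_trialgebra_of_averaging (R : Type*) [CommRing R] (L : Type*) [LieRing L]
    [LieAlgebra R L] (φ : L →ₗ⁅R⁆ L) (hφ : ∀ x : L, φ (φ x) = φ x) :
    ∀ x y z : L,
      (⁅φ x, y⁆ = -⁅y, φ x⁆) ∧
      (⁅x, y⁆ = -⁅y, x⁆) ∧
      (⁅φ ⁅x, y⁆, z⁆ = ⁅φ ⁅φ x, y⁆, z⁆) ∧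
      (⁅φ x, ⁅φ y, z⁆⁆ = ⁅φ ⁅φ x, y⁆, z⁆ + ⁅φ y, ⁅φ x, z⁆⁆) ∧
      (⁅⁅φ x, y⁆, z⁆ = ⁅φ x, ⁅y, z⁆⁆ + ⁅⁅φ x, z⁆, y⁆) ∧
      (⁅⁅x, y⁆, z⁆ + ⁅⁅y, z⁆, x⁆ + ⁅⁅z, x⁆, y⁆ = 0) := by
  intro x y z
  refine ⟨(lie_skew _ _).symm, (lie_skew _ _).symm, ?_, ?_, ?_, ?_⟩
  · rw [LieHom.map_lie, LieHom.map_lie, hφ]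
  · rw [LieHom.map_lie, hφ, leibniz_lie]
  · rw [lie_lie, ← lie_skew y ⁅φ x, z⁆, sub_neg_eq_add]
  · rw [← lie_skew ⁅x, y⁆ z, ← lie_skew ⁅y, z⁆ x, ← lie_skew ⁅z, x⁆ y,
      ← neg_add, ← neg_add, lie_jacobi z x y, neg_zero]
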